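/- Let F be a closed subgroup of a Lie group of the form l ⋉ K, where l ≅ ℝ is a one-parameter subgroup and K is compact, and suppose the projection q : l ⋉ K → l restricted to F is surjective. Then the identity component F° of F also surjects onto l. -/

import Mathlib

open SemidirectProduct

/-- Product-type topology on a semidirect product. -/
instance sdTop {N A : Type*} [Group N] [Group A] [TopologicalSpace N] [TopologicalSpace A]
    {φ : A →* MulAut N} : TopologicalSpace (N ⋊[φ] A) :=
  TopologicalSpace.induced (fun g : N ⋊[φ] A => (g.left, g.right)) inferInstance

open Set

section Core

variable {K : Type*} [Group K] [TopologicalSpace K] [IsTopologicalGroup K] [CompactSpace K]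

/-- Key openness: the set of `s` having a fiber point in an open `U` is open. -/
lemma key_open (F : Set (K × ℝ))
    (hF : IsClosed F) (F0 : Set K)
    (hmem : ∀ f ∈ F0, ∀ k t, (k, t) ∈ F → (f * k, t) ∈ F)
    (hinv : ∀ f ∈ F0, f⁻¹ ∈ F0)
    (hdiv : ∀ k k' t, (k, t) ∈ F → (k', t) ∈ F → k * k'⁻¹ ∈ F0)
    (hne : ∀ t : ℝ, ∃ k, (k, t) ∈ F)
    (U : Set K) (hU : IsOpen U) :
    IsOpen {s : ℝ | ∃ k ∈ U, (k, s) ∈ F} := by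
  set SatU : Set K := ⋃ f ∈ F0, (fun u => f * u) '' U with hSat
  have hSatOpen : IsOpen SatU :=
    isOpen_biUnion fun f _ => (isOpenMap_mul_left f) U hU
  have hD : IsClosed (F ∩ (SatUᶜ ×ˢ (univ : Set ℝ))) :=
    hF.inter (hSatOpen.isClosed_compl.prod isClosed_univ)
  have himg : IsClosed (Prod.snd '' (F ∩ (SatUᶜ ×ˢ (univ : Set ℝ)))) :=
    isClosedMap_snd_of_compactSpace _ hD
  have hset : {s : ℝ | ∃ k ∈ U, (k, s) ∈ F}
      = (Prod.snd '' (F ∩ (SatUᶜ ×ˢ (univ : Set ℝ))))ᶜ := by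
    ext s
    simp only [mem_setOf_eq, mem_compl_iff, mem_image, not_exists]
    constructor
    · rintro ⟨k, hkU, hkF⟩ ⟨k', s'⟩ ⟨⟨hk'F, hk'Sat, -⟩, rfl⟩
      apply hk'Sat
      have hk'k : k' * k⁻¹ ∈ F0 := hdiv k' k s' hk'F hkF
      refine mem_biUnion hk'k ⟨k, hkU, ?_⟩
      simp
    · intro h
      obtain ⟨k', hk'F⟩ := hne s
      by_contra hcon
      push_neg at hcon
      have hk'Sat : k' ∈ SatU := by
        by_contra hk'
        exact h (k', s) ⟨⟨hk'F, hk', trivial⟩, rfl⟩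
      obtain ⟨f, hf, u, hu, huv⟩ := by
        simpa only [hSat, mem_iUnion, mem_image, exists_prop] using hk'Sat
      have : (f⁻¹ * k', s) ∈ F := hmem f⁻¹ (hinv f hf) k' s hk'F
      rw [← huv] at this
      rw [inv_mul_cancel_left] at this
      exact hcon u hu this
  rw [hset]
  exact himg.isOpen_compl

end Core

section Core2

variable {K : Type*} [Group K] [TopologicalSpace K] [IsTopologicalGroup K] [CompactSpace K]

lemma core [T2Space K] (F : Set (K × ℝ))
    (hF : IsClosed F) (h1 : ((1 : K), (0 : ℝ)) ∈ F) (F0 : Set K)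
    (hmem : ∀ f ∈ F0, ∀ k t, (k, t) ∈ F → (f * k, t) ∈ F)
    (hinv : ∀ f ∈ F0, f⁻¹ ∈ F0)
    (hdiv : ∀ k k' t, (k, t) ∈ F → (k', t) ∈ F → k * k'⁻¹ ∈ F0)
    (hne : ∀ t : ℝ, ∃ k, (k, t) ∈ F) :
    ∀ t : ℝ, ∃ x : F, (x : K × ℝ).2 = t ∧
      x ∈ connectedComponent (⟨(1, 0), h1⟩ : F) := by
  intro t
  set I : Set ℝ := uIcc 0 t with hI
  have h0I : (0 : ℝ) ∈ I := left_mem_uIcc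
  have htI : t ∈ I := right_mem_uIcc
  set Xs : Set (K × ℝ) := F ∩ (univ : Set K) ×ˢ I with hXs
  have hXclosed : IsClosed Xs := hF.inter (isClosed_univ.prod isClosed_Icc)
  have hXcompact : IsCompact Xs :=
    (isCompact_univ.prod isCompact_uIcc).of_isClosed_subset hXclosed inter_subset_right
  haveI : CompactSpace Xs := isCompact_iff_compactSpace.mp hXcompact
  have hx₀mem : ((1 : K), (0 : ℝ)) ∈ Xs := ⟨h1, mem_prod.mpr ⟨trivial, h0I⟩⟩
  set x₀ : Xs := ⟨((1 : K), (0 : ℝ)), hx₀mem⟩ with hx₀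
  set π : Xs → ℝ := fun x => (x : K × ℝ).2 with hπdef
  have hπ : Continuous π := continuous_snd.comp continuous_subtype_val
  -- every clopen set containing x₀ has π-image exactly I
  have hclopen : ∀ V : Set Xs, IsClopen V → x₀ ∈ V → π '' V = I := by
    intro V hV hx₀V
    have hVc : IsCompact (π '' V) := (hV.isClosed.isCompact).image hπ
    have hAclosed : IsClosed (π '' V) := hVc.isClosed
    have hAsubI : π '' V ⊆ I := by
      rintro s ⟨x, hxV, rfl⟩
      exact x.2.2.2
    have hrel : ∀ a ∈ π '' V, ∃ O : Set ℝ, IsOpen O ∧ a ∈ O ∧ I ∩ O ⊆ π '' V := by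
      rintro a ⟨x, hxV, rfl⟩
      obtain ⟨W, hW, hVW⟩ := isOpen_induced_iff.mp hV.isOpen
      have hxW : (x : K × ℝ) ∈ W := by
        rw [← hVW] at hxV; exact hxV
      obtain ⟨U, J, hU, hJ, hxU, haJ, hUJ⟩ :=
        isOpen_prod_iff.mp hW (x : K × ℝ).1 (x : K × ℝ).2 (by simpa using hxW)
      refine ⟨J ∩ {s : ℝ | ∃ k ∈ U, (k, s) ∈ F},
        hJ.inter (key_open F hF F0 hmem hinv hdiv hne U hU),
        ⟨haJ, ⟨(x : K × ℝ).1, hxU, ?_⟩⟩, ?_⟩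
      · have := x.2.1
        simpa using this
      · rintro s ⟨hsI, hsJ, k, hkU, hkF⟩
        have hmemXs : (k, s) ∈ Xs := ⟨hkF, mem_prod.mpr ⟨trivial, hsI⟩⟩
        have hkW : ((k, s) : K × ℝ) ∈ W := hUJ (mk_mem_prod hkU hsJ)
        have : (⟨(k, s), hmemXs⟩ : Xs) ∈ V := by
          rw [← hVW]; exact hkW
        exact ⟨_, this, rfl⟩
    choose O hOopen hOmem hOsub using hrel
    have hIpc : IsPreconnected I := isPreconnected_uIcc
    have hsub2 : I ⊆ π '' V := by
      set u : Set ℝ := ⋃ a, ⋃ h : a ∈ π '' V, O a h with hu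
      have huopen : IsOpen u := isOpen_iUnion fun a => isOpen_iUnion fun h => hOopen a h
      by_contra hcon
      obtain ⟨s₀, hs₀I, hs₀A⟩ := not_subset.mp hcon
      have h0A : (0 : ℝ) ∈ π '' V := ⟨x₀, hx₀V, rfl⟩
      have := hIpc u (π '' V)ᶜ huopen hAclosed.isOpen_compl
        (by
          intro s hsI
          by_cases h : s ∈ π '' V
          · exact Or.inl (mem_iUnion.mpr ⟨s, mem_iUnion.mpr ⟨h, hOmem s h⟩⟩)
          · exact Or.inr h)
        ⟨0, h0I, mem_iUnion.mpr ⟨0, mem_iUnion.mpr ⟨h0A, hOmem 0 h0A⟩⟩⟩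
        ⟨s₀, hs₀I, hs₀A⟩
      obtain ⟨s, hsI, hsu, hsA⟩ := this
      obtain ⟨a, ha⟩ := mem_iUnion.mp hsu
      obtain ⟨haA, hsOa⟩ := mem_iUnion.mp ha
      exact hsA (hOsub a haA ⟨hsI, hsOa⟩)
    exact Subset.antisymm hAsubI hsub2
  -- quasicomponent argument
  have hcc := connectedComponent_eq_iInter_isClopen x₀
  have key : ∃ x : Xs, π x = t ∧ x ∈ connectedComponent x₀ := by
    haveI : Nonempty {Z : Set Xs // IsClopen Z ∧ x₀ ∈ Z} :=
      ⟨⟨univ, isClopen_univ, mem_univ _⟩⟩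
    have hdir : Directed (· ⊇ ·)
        (fun Z : {Z : Set Xs // IsClopen Z ∧ x₀ ∈ Z} => Z.1 ∩ π ⁻¹' {t}) := by
      rintro ⟨Z₁, hZ₁, h₁⟩ ⟨Z₂, hZ₂, h₂⟩
      exact ⟨⟨Z₁ ∩ Z₂, hZ₁.inter hZ₂, ⟨h₁, h₂⟩⟩,
        fun x hx => ⟨hx.1.1, hx.2⟩, fun x hx => ⟨hx.1.2, hx.2⟩⟩
    have hnonempty : ∀ Z : {Z : Set Xs // IsClopen Z ∧ x₀ ∈ Z},
        (Z.1 ∩ π ⁻¹' {t}).Nonempty := by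
      rintro ⟨Z, hZ, hx₀Z⟩
      have : t ∈ π '' Z := (hclopen Z hZ hx₀Z).symm ▸ htI
      obtain ⟨x, hxZ, hxt⟩ := this
      exact ⟨x, hxZ, hxt⟩
    obtain ⟨x, hx⟩ := IsCompact.nonempty_iInter_of_directed_nonempty_isCompact_isClosed
      _ hdir hnonempty
      (fun Z => (Z.2.1.isClosed.isCompact).inter_right (isClosed_singleton.preimage hπ))
      (fun Z => Z.2.1.isClosed.inter (isClosed_singleton.preimage hπ))
    rw [mem_iInter] at hx
    refine ⟨x, (hx ⟨univ, isClopen_univ, mem_univ _⟩).2, ?_⟩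
    rw [hcc, mem_iInter]
    exact fun Z => (hx Z).1
  obtain ⟨x, hxt, hxcc⟩ := key
  set ρ : Xs → F := fun x => (⟨(x : K × ℝ), x.2.1⟩ : F) with hρdef
  have hρ : Continuous ρ := Continuous.subtype_mk continuous_subtype_val _
  have hpc : IsPreconnected (ρ '' connectedComponent x₀) :=
    (isPreconnected_connectedComponent).image _ hρ.continuousOn
  have hbase : ρ x₀ ∈ ρ '' connectedComponent x₀ :=
    ⟨x₀, mem_connectedComponent, rfl⟩
  have hsub : ρ '' connectedComponent x₀ ⊆ connectedComponent (⟨(1, 0), h1⟩ : F) :=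
    hpc.subset_connectedComponent hbase
  exact ⟨ρ x, hxt, hsub ⟨x, hxcc, rfl⟩⟩

end Core2

/-- Preimage of a preconnected set under a continuous open surjection with
inseparable fibers is preconnected. -/
lemma preconn_preimage {X Y : Type*} [TopologicalSpace X] [TopologicalSpace Y]
    {f : X → Y} (hc : Continuous f) (ho : IsOpenMap f) (hsurj : Function.Surjective f)
    (hfib : ∀ x y, f x = f y → Inseparable x y)
    {s : Set Y} (hs : IsPreconnected s) : IsPreconnected (f ⁻¹' s) := by
  intro u v hu hv hcov hne_u hne_v
  obtain ⟨a, has, hau⟩ := hne_u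
  obtain ⟨b, hbs, hbv⟩ := hne_v
  have h' := hs (f '' u) (f '' v) (ho u hu) (ho v hv)
    (by
      intro y hy
      obtain ⟨x, rfl⟩ := hsurj y
      rcases hcov (show x ∈ f ⁻¹' s from hy) with h | h
      exacts [Or.inl ⟨x, h, rfl⟩, Or.inr ⟨x, h, rfl⟩])
    ⟨f a, has, a, hau, rfl⟩ ⟨f b, hbs, b, hbv, rfl⟩
  obtain ⟨y, hys, ⟨p, hpu, hpy⟩, ⟨q, hqv, hqy⟩⟩ := h'
  have hins : Inseparable q p := hfib _ _ (by rw [hpy, hqy])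
  have hqu : q ∈ u := (hins.mem_open_iff hu).mpr hpu
  exact ⟨q, by rw [mem_preimage, hqy]; exact hys, hqu, hqv⟩

section Core3

variable {K : Type*} [Group K] [TopologicalSpace K] [IsTopologicalGroup K] [CompactSpace K]

lemma core' (F : Set (K × ℝ))
    (hF : IsClosed F) (h1 : ((1 : K), (0 : ℝ)) ∈ F) (F0 : Set K)
    (hmem : ∀ f ∈ F0, ∀ k t, (k, t) ∈ F → (f * k, t) ∈ F)
    (hinv : ∀ f ∈ F0, f⁻¹ ∈ F0)
    (hdiv : ∀ k k' t, (k, t) ∈ F → (k', t) ∈ F → k * k'⁻¹ ∈ F0)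
    (hne : ∀ t : ℝ, ∃ k, (k, t) ∈ F) :
    ∀ t : ℝ, ∃ x : F, (x : K × ℝ).2 = t ∧
      x ∈ connectedComponent (⟨(1, 0), h1⟩ : F) := by
  intro t
  haveI : IsTopologicalGroup (SeparationQuotient K) := ⟨⟩
  haveI : CompactSpace (SeparationQuotient K) := by
    constructor
    rw [← SeparationQuotient.surjective_mk.range_eq, ← Set.image_univ]
    exact isCompact_univ.image SeparationQuotient.continuous_mk
  haveI : T3Space (SeparationQuotient K) := ⟨⟩
  set mk : K → SeparationQuotient K := SeparationQuotient.mk with hmk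
  set m : K × ℝ → SeparationQuotient K × ℝ := Prod.map mk id with hm
  have hmcont : Continuous m := (SeparationQuotient.continuous_mk).prodMap continuous_id
  have hmopen : IsOpenMap m := SeparationQuotient.isOpenMap_mk.prodMap IsOpenMap.id
  have hmsurj : Function.Surjective m :=
    (SeparationQuotient.surjective_mk).prodMap Function.surjective_id
  -- inseparability of fibers of m
  have hfib0 : ∀ p q : K × ℝ, m p = m q → Inseparable p q := by
    rintro ⟨a, s⟩ ⟨b, s'⟩ h
    have h1' : mk a = mk b := congrArg Prod.fst h
    have h2' : s = s' := congrArg Prod.snd h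
    subst h2'
    exact inseparable_prod.mpr ⟨SeparationQuotient.mk_eq_mk.mp h1', Inseparable.refl s⟩
  set F' : Set (SeparationQuotient K × ℝ) := m '' F with hF'
  have hF'closed : IsClosed F' := by
    rw [← isOpen_compl_iff]
    have : F'ᶜ = m '' Fᶜ := by
      ext y
      constructor
      · intro hy
        obtain ⟨p, rfl⟩ := hmsurj y
        refine ⟨p, fun hp => hy ⟨p, hp, rfl⟩, rfl⟩
      · rintro ⟨p, hp, rfl⟩ ⟨q, hq, hqe⟩
        exact hp (((hfib0 p q hqe.symm).mem_closed_iff hF).mpr hq)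
    rw [this]
    exact hmopen _ hF.isOpen_compl
  have h1' : ((1 : SeparationQuotient K), (0 : ℝ)) ∈ F' := ⟨(1, 0), h1, rfl⟩
  set F0' : Set (SeparationQuotient K) := mk '' F0 with hF0'
  have hmem' : ∀ f ∈ F0', ∀ k t, (k, t) ∈ F' → (f * k, t) ∈ F' := by
    rintro f' ⟨f, hf, rfl⟩ k' s ⟨⟨k, s'⟩, hkF, hke⟩
    have hs : s' = s := congrArg Prod.snd hke
    have hk : mk k = k' := congrArg Prod.fst hke
    subst hs
    refine ⟨(f * k, s'), hmem f hf k s' hkF, ?_⟩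
    simp only [hm, Prod.map_apply, id]
    simp only [hmk] at hk ⊢
    rw [SeparationQuotient.mk_mul, hk]
  have hinv' : ∀ f ∈ F0', f⁻¹ ∈ F0' := by
    rintro f' ⟨f, hf, rfl⟩
    exact ⟨f⁻¹, hinv f hf, SeparationQuotient.mk_inv f⟩
  have hdiv' : ∀ k k' s, (k, s) ∈ F' → (k', s) ∈ F' → k * k'⁻¹ ∈ F0' := by
    rintro k1 k2 s ⟨⟨a, s1⟩, haF, hae⟩ ⟨⟨b, s2⟩, hbF, hbe⟩
    have hs1 : s1 = s := congrArg Prod.snd hae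
    have hs2 : s2 = s := congrArg Prod.snd hbe
    subst hs1; subst hs2
    have hk1 : mk a = k1 := congrArg Prod.fst hae
    have hk2 : mk b = k2 := congrArg Prod.fst hbe
    refine ⟨a * b⁻¹, hdiv a b s2 haF hbF, ?_⟩
    simp only [hmk] at hk1 hk2 ⊢
    rw [SeparationQuotient.mk_mul, SeparationQuotient.mk_inv, hk1, hk2]
  have hne' : ∀ s : ℝ, ∃ k, (k, s) ∈ F' := by
    intro s
    obtain ⟨k, hk⟩ := hne s
    exact ⟨mk k, (k, s), hk, rfl⟩
  obtain ⟨x', hx't, hx'cc⟩ := core F' hF'closed h1' F0' hmem' hinv' hdiv' hne' t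
  -- the induced map on subtypes
  set g : F → F' := fun x => ⟨m (x : K × ℝ), ⟨(x : K × ℝ), x.2, rfl⟩⟩ with hg
  have hgcont : Continuous g := Continuous.subtype_mk (hmcont.comp continuous_subtype_val) _
  have hgsurj : Function.Surjective g := by
    rintro ⟨y, ⟨p, hp, rfl⟩⟩
    exact ⟨⟨p, hp⟩, rfl⟩
  have hgopen : IsOpenMap g := by
    intro Uo hUo
    obtain ⟨W, hW, hWeq⟩ := isOpen_induced_iff.mp hUo
    have himg : g '' Uo = Subtype.val ⁻¹' (m '' W) := by
      ext x'
      constructor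
      · rintro ⟨x, hxU, rfl⟩
        rw [← hWeq] at hxU
        exact ⟨(x : K × ℝ), hxU, rfl⟩
      · rintro ⟨w, hwW, hweq⟩
        obtain ⟨y, hyF, hyeq⟩ := x'.2
        have hins : Inseparable y w := hfib0 y w (by rw [hyeq, hweq])
        have hyW : y ∈ W := (hins.mem_open_iff hW).mpr hwW
        refine ⟨⟨y, hyF⟩, ?_, Subtype.ext hyeq⟩
        rw [← hWeq]; exact hyW
    rw [himg]
    exact (hmopen W hW).preimage continuous_subtype_val
  have hgfib : ∀ x y : ↥F, g x = g y → Inseparable x y := by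
    intro x y hxy
    have : m (x : K × ℝ) = m (y : K × ℝ) := congrArg Subtype.val hxy
    have hins := hfib0 _ _ this
    exact (subtype_inseparable_iff x y).mpr hins
  set S : Set F := g ⁻¹' (connectedComponent (⟨(1, 0), h1'⟩ : F')) with hS
  have hSpc : IsPreconnected S :=
    preconn_preimage hgcont hgopen hgsurj hgfib isPreconnected_connectedComponent
  have hbaseS : (⟨(1, 0), h1⟩ : F) ∈ S := by
    have : g ⟨(1, 0), h1⟩ = ⟨(1, 0), h1'⟩ := by
      apply Subtype.ext
      simp only [hg, hm, Prod.map_apply, id]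
      rfl
    rw [hS, mem_preimage, this]
    exact mem_connectedComponent
  obtain ⟨x, hgx⟩ := hgsurj x'
  have hxS : x ∈ S := by
    rw [hS, mem_preimage, hgx]; exact hx'cc
  refine ⟨x, ?_, hSpc.subset_connectedComponent hbaseS hxS⟩
  have : (m (x : K × ℝ)).2 = t := by
    rw [show m (x : K × ℝ) = (x' : SeparationQuotient K × ℝ) from congrArg Subtype.val hgx]
    exact hx't
  simpa [hm] using this

end Core3

/-- Let `F` be a closed subgroup of a group of the form `l ⋉ K`, where
`l ≅ ℝ` is a one-parameter subgroup and `K` is compact, and suppose the projection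
`q : l ⋉ K → l` restricted to `F` is surjective.  Then the identity component `F°` of `F`
also surjects onto `l`. -/
theorem stmt19 {K : Type*} [Group K] [TopologicalSpace K] [IsTopologicalGroup K] [CompactSpace K]
    (φ : Multiplicative ℝ →* MulAut K)
    (F : Subgroup (K ⋊[φ] Multiplicative ℝ))
    (hclosed : IsClosed (F : Set (K ⋊[φ] Multiplicative ℝ)))
    (hsurj : ∀ t : Multiplicative ℝ, ∃ g ∈ F, SemidirectProduct.right g = t) :
    ∀ t : Multiplicative ℝ, ∃ g : F,
      SemidirectProduct.right (g : K ⋊[φ] Multiplicative ℝ) = t ∧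
      g ∈ connectedComponent (1 : F) := by
  intro t
  set G := K ⋊[φ] Multiplicative ℝ with hG
  -- the homeomorphism with the product
  set E : G ≃ K × ℝ :=
    { toFun := fun g => (g.left, Multiplicative.toAdd g.right)
      invFun := fun p => ⟨p.1, Multiplicative.ofAdd p.2⟩
      left_inv := fun g => by cases g; rfl
      right_inv := fun p => rfl } with hE
  have hind : Topology.IsInducing E := ⟨rfl⟩
  set E' : G ≃ₜ K × ℝ := Equiv.toHomeomorphOfIsInducing E hind with hE'
  set Fe : Set (K × ℝ) := E '' (F : Set G) with hFeDef
  have hFe : ∀ (k : K) (s : ℝ),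
      ((k, s) ∈ Fe ↔ (⟨k, Multiplicative.ofAdd s⟩ : G) ∈ F) := by
    intro k s
    rw [hFeDef, Equiv.image_eq_preimage_symm]
    rfl
  have hFeClosed : IsClosed Fe := E'.isClosedMap _ hclosed
  have h1e : ((1 : K), (0 : ℝ)) ∈ Fe := (hFe 1 0).mpr F.one_mem
  set F0 : Set K := {k : K | (k, (0 : ℝ)) ∈ Fe} with hF0
  have hmem : ∀ f ∈ F0, ∀ k s, (k, s) ∈ Fe → (f * k, s) ∈ Fe := by
    intro f hf k s hks
    have hf := (hFe f 0).mp hf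
    rw [hFe] at hks ⊢
    have hprod : (⟨f, Multiplicative.ofAdd 0⟩ : G) * ⟨k, Multiplicative.ofAdd s⟩
        = ⟨f * k, Multiplicative.ofAdd s⟩ := by
      have : (Multiplicative.ofAdd (0 : ℝ)) = 1 := rfl
      apply SemidirectProduct.ext
      · simp [this]
      · simp [this]
    rw [← hprod]
    exact F.mul_mem hf hks
  have hinv : ∀ f ∈ F0, f⁻¹ ∈ F0 := by
    intro f hf
    rw [hF0, mem_setOf_eq, hFe] at hf ⊢
    have hprod : (⟨f, Multiplicative.ofAdd 0⟩ : G)⁻¹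
        = ⟨f⁻¹, Multiplicative.ofAdd 0⟩ := by
      have : (Multiplicative.ofAdd (0 : ℝ)) = 1 := rfl
      apply SemidirectProduct.ext
      · simp [this, SemidirectProduct.inv_left]
      · simp [this, SemidirectProduct.inv_right]
    rw [← hprod]
    exact F.inv_mem hf
  have hdiv : ∀ k k' s, (k, s) ∈ Fe → (k', s) ∈ Fe → k * k'⁻¹ ∈ F0 := by
    intro k k' s hk hk'
    rw [hFe] at hk hk'
    rw [hF0, mem_setOf_eq, hFe]
    have hprod : (⟨k, Multiplicative.ofAdd s⟩ : G) * (⟨k', Multiplicative.ofAdd s⟩ : G)⁻¹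
        = ⟨k * k'⁻¹, Multiplicative.ofAdd 0⟩ := by
      apply SemidirectProduct.ext
      · simp only [SemidirectProduct.mul_left, SemidirectProduct.inv_left,
          SemidirectProduct.inv_right]
        rw [← MulAut.mul_apply, ← map_mul, mul_inv_cancel, map_one, MulAut.one_apply]
      · simp only [SemidirectProduct.mul_right, SemidirectProduct.inv_right]
        rw [mul_inv_cancel]
        rfl
    rw [← hprod]
    exact F.mul_mem hk (F.inv_mem hk')
  have hne : ∀ s : ℝ, ∃ k, (k, s) ∈ Fe := by
    intro s
    obtain ⟨g, hgF, hgr⟩ := hsurj (Multiplicative.ofAdd s)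
    refine ⟨g.left, (hFe _ _).mpr ?_⟩
    have : (⟨g.left, Multiplicative.ofAdd s⟩ : G) = g := by
      apply SemidirectProduct.ext
      · rfl
      · rw [hgr]
    rw [this]
    exact hgF
  obtain ⟨x, hxt, hxcc⟩ := core' Fe hFeClosed h1e F0 hmem hinv hdiv hne (Multiplicative.toAdd t)
  -- transfer back
  set ρ : Fe → F := fun x => ⟨E.symm (x : K × ℝ), by
    obtain ⟨g, hgF, hge⟩ := x.2
    rw [← hge, Equiv.symm_apply_apply]
    exact hgF⟩ with hρ
  have hρcont : Continuous ρ :=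
    Continuous.subtype_mk (E'.symm.continuous.comp continuous_subtype_val) _
  have hρbase : ρ ⟨(1, 0), h1e⟩ = (1 : F) := by
    apply Subtype.ext
    rfl
  have hpc : IsPreconnected (ρ '' connectedComponent (⟨(1, 0), h1e⟩ : Fe)) :=
    (isPreconnected_connectedComponent).image _ hρcont.continuousOn
  have hbase : (1 : F) ∈ ρ '' connectedComponent (⟨(1, 0), h1e⟩ : Fe) :=
    ⟨_, mem_connectedComponent, hρbase⟩
  have hsub : ρ '' connectedComponent (⟨(1, 0), h1e⟩ : Fe)
      ⊆ connectedComponent (1 : F) :=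
    hpc.subset_connectedComponent hbase
  refine ⟨ρ x, ?_, hsub ⟨x, hxcc, rfl⟩⟩
  show (E.symm (x : K × ℝ)).right = t
  have : (E.symm (x : K × ℝ)).right = Multiplicative.ofAdd (x : K × ℝ).2 := rfl
  rw [this, hxt]
  simp
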